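/- (Claim 2) Let P be a popular matching in a roommates instance G that leaves exactly the vertex set U uncovered, and let Z = V ∖ N(U) ∖ U. If a matching edge (p,q) ∈ P can be reached in G_P by an alternating path starting from an edge blocking P, with q the last vertex of the path, then q ∈ Z. -/

import Mathlib

/-- A roommates instance: a simple graph together with, for each vertex,
a ranking of vertices (lower rank = more preferred), injective on neighbors. -/
structure Roommates (V : Type*) where
  G : SimpleGraph V
  rank : V → V → ℕ
  rank_inj : ∀ u a b, G.Adj u a → G.Adj u b → rank u a = rank u b → a = b

variable {V : Type*}

/-- `M` encodes a matching: `M u = some v` means `u` is matched to `v`. -/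
def IsMatching (R : Roommates V) (M : V → Option V) : Prop :=
  ∀ u v, M u = some v → R.G.Adj u v ∧ M v = some u

/-- Vertex `v` prefers matching `M` to matching `M'`. -/
def Prefers (R : Roommates V) (M M' : V → Option V) (v : V) : Prop :=
  (∃ w, M v = some w ∧ M' v = none) ∨
  (∃ w w', M v = some w ∧ M' v = some w' ∧ R.rank v w < R.rank v w')

/-- `M` is popular: it never loses a head-to-head election. -/
def Popular [Fintype V] (R : Roommates V) (M : V → Option V) : Prop :=
  ∀ M', IsMatching R M' →
    {v | Prefers R M' M v}.ncard ≤ {v | Prefers R M M' v}.ncard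

/-- Edge `(u,v)` blocks `M`: each endpoint is unmatched or prefers the other
endpoint to its partner. -/
def Blocks (R : Roommates V) (M : V → Option V) (u v : V) : Prop :=
  R.G.Adj u v ∧ M u ≠ some v ∧
  (∀ w, M u = some w → R.rank u v < R.rank u w) ∧
  (∀ w, M v = some w → R.rank v u < R.rank v w)

def IsStable (R : Roommates V) (M : V → Option V) : Prop :=
  ∀ u v, ¬ Blocks R M u v

/-- `u` votes `+` for `v` against its situation in `M`
(true when `u` is unmatched or prefers `v` to its `M`-partner). -/
def VotePlus (R : Roommates V) (M : V → Option V) (u v : V) : Prop :=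
  ∀ w, M u = some w → R.rank u v < R.rank u w

/-- Non-matching edge of `G_M`, i.e. not labeled `(−,−)`. -/
def NonMatchEdge (R : Roommates V) (M : V → Option V) (u v : V) : Prop :=
  R.G.Adj u v ∧ M u ≠ some v ∧ (VotePlus R M u v ∨ VotePlus R M v u)

/-- `AltList A M b l`: the list of vertices `l` forms an alternating sequence,
whose first edge is a matching edge if `b = true` and an allowed (`A`)
non-matching edge if `b = false`. -/
def AltList (A : V → V → Prop) (M : V → Option V) : Bool → List V → Prop
  | _, [] => True
  | _, [_] => True
  | true, u :: v :: rest => M u = some v ∧ AltList A M false (v :: rest)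
  | false, u :: v :: rest => A u v ∧ AltList A M true (v :: rest)

/-- A matching of the subgraph induced on `W`. -/
def IsMatchingOn (R : Roommates V) (W : Set V) (M : V → Option V) : Prop :=
  IsMatching R M ∧ ∀ u v, M u = some v → u ∈ W ∧ v ∈ W

/-- Popularity within the subgraph induced on `W`. -/
def PopularOn (R : Roommates V) (W : Set V) (M : V → Option V) : Prop :=
  ∀ M', IsMatchingOn R W M' →
    {v | v ∈ W ∧ Prefers R M' M v}.ncard ≤ {v | v ∈ W ∧ Prefers R M M' v}.ncard

/-- Stability within the subgraph induced on `W`. -/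
def StableOn (R : Roommates V) (W : Set V) (M : V → Option V) : Prop :=
  ∀ u v, u ∈ W → v ∈ W → ¬ Blocks R M u v

theorem prefers_of_votePlus (R : Roommates V) {M M' : V → Option V} {a c : V}
    (h : M' a = some c) (hv : VotePlus R M a c) : Prefers R M' M a := by
  cases hM : M a with
  | none => exact Or.inl ⟨c, h, hM⟩
  | some w => exact Or.inr ⟨c, w, h, hM, hv w hM⟩

theorem not_prefers_of_eq (R : Roommates V) {M M' : V → Option V} {a : V}
    (h : M a = M' a) : ¬ Prefers R M M' a := by
  rintro (⟨w, h1, h2⟩ | ⟨w, w', h1, h2, h3⟩)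
  · rw [h, h2] at h1; cases h1
  · rw [h, h2] at h1
    obtain rfl : w = w' := by simpa using h1.symm
    exact lt_irrefl _ h3

theorem prefers_antisymm (R : Roommates V) {M M' : V → Option V} {a : V}
    (h1 : Prefers R M M' a) (h2 : Prefers R M' M a) : False := by
  rcases h1 with (⟨w, hw, hw'⟩ | ⟨w, w', hw, hw', hr⟩)
  · rcases h2 with (⟨z, hz, hz'⟩ | ⟨z, z', hz, hz', hr'⟩)
    · rw [hw'] at hz; cases hz
    · rw [hw'] at hz; cases hz
  · rcases h2 with (⟨z, hz, hz'⟩ | ⟨z, z', hz, hz', hr'⟩)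
    · rw [hw] at hz'; cases hz'
    · rw [hw] at hz'
      rw [hw'] at hz
      obtain rfl : w = z' := by simpa using hz'
      obtain rfl : w' = z := by simpa using hz
      exact lt_asymm hr hr'

theorem alt_all_matched (R : Roommates V) (P : V → Option V) (hP : IsMatching R P) :
    ∀ (l : List V), AltList (NonMatchEdge R P) P false l → Odd l.length →
      (∀ a, l.head? = some a → ∃ c, P a = some c) → ∀ v ∈ l, ∃ c, P v = some c
  | [] => by intro _ _ _ v hv; simp at hv
  | [a] => by
      intro _ _ hh v hv
      simp only [List.mem_singleton] at hv; subst hv; exact hh v rfl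
  | [a, b] => by
      intro _ hodd _
      simp [Nat.odd_iff] at hodd
  | a :: b :: c :: rest => by
      intro halt hodd hh v hv
      obtain ⟨hab, hbc, halt'⟩ := halt
      have hodd' : Odd (c :: rest).length := by
        simp only [List.length_cons, Nat.odd_iff] at hodd ⊢; omega
      have IH := alt_all_matched R P hP (c :: rest) halt' hodd'
        (fun z hz => by
          have hzc : c = z := by simpa using hz
          exact ⟨b, by rw [← hzc]; exact (hP b c hbc).2⟩)
      rcases List.mem_cons.mp hv with rfl | hv
      · exact hh v rfl
      rcases List.mem_cons.mp hv with rfl | hv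
      · exact ⟨c, hbc⟩
      · exact IH v hv

theorem alt_tail_closed (R : Roommates V) (P : V → Option V) (hP : IsMatching R P) :
    ∀ (l : List V), AltList (NonMatchEdge R P) P false l → Odd l.length →
      ∀ c ∈ l.tail, ∀ d, P c = some d → d ∈ l.tail
  | [] => by intro _ _ c hc; simp at hc
  | [a] => by intro _ _ c hc; simp at hc
  | [a, b] => by intro _ hodd; simp [Nat.odd_iff] at hodd
  | a :: b :: c :: rest => by
      intro halt hodd e he d hd
      obtain ⟨hab, hbc, halt'⟩ := halt
      have hodd' : Odd (c :: rest).length := by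
        simp only [List.length_cons, Nat.odd_iff] at hodd ⊢; omega
      have IH := alt_tail_closed R P hP (c :: rest) halt' hodd'
      rcases List.mem_cons.mp he with rfl | he2
      · rw [hbc] at hd
        obtain rfl : c = d := by simpa using hd
        exact List.mem_cons_of_mem _ (List.mem_cons_self)
      rcases List.mem_cons.mp he2 with rfl | he3
      · have hcb : P e = some b := (hP b e hbc).2
        rw [hcb] at hd
        obtain rfl : b = d := by simpa using hd
        exact List.mem_cons_self
      · have := IH e he3 d hd
        exact List.mem_cons_of_mem _ (List.mem_cons_of_mem _ this)

def pairUp {V : Type*} [DecidableEq V] : List V → V → Option V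
  | [], _ => none
  | [_], _ => none
  | a :: b :: rest, v => if v = a then some b else if v = b then some a else pairUp rest v

theorem pairUp_head_left [DecidableEq V] (a b : V) (L : List V) :
    pairUp (a :: b :: L) a = some b := by
  rw [pairUp]; simp

theorem pairUp_head_right [DecidableEq V] {a b : V} (L : List V) (h : b ≠ a) :
    pairUp (a :: b :: L) b = some a := by
  rw [pairUp]; simp [h]

theorem pairUp_cons_cons [DecidableEq V] {a b v : V} (L : List V) (h1 : v ≠ a) (h2 : v ≠ b) :
    pairUp (a :: b :: L) v = pairUp L v := by
  rw [pairUp]; simp [h1, h2]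

theorem pair_master [DecidableEq V] (R : Roommates V) (P : V → Option V) :
    ∀ (l : List V) (u : V), AltList (NonMatchEdge R P) P false l → Odd l.length →
      (l ++ [u]).Nodup → ∀ v ∈ l ++ [u], ∃ s t, s ≠ t ∧ (v = s ∨ v = t) ∧
        pairUp (l ++ [u]) s = some t ∧ pairUp (l ++ [u]) t = some s ∧
        s ∈ l ++ [u] ∧ t ∈ l ++ [u] ∧
        (NonMatchEdge R P s t ∧ s ∈ l ∧ t ∈ l ∨ l.getLast? = some s ∧ t = u)
  | [], u => by intro _ hodd; simp [Nat.odd_iff] at hodd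
  | [a], u => by
      intro _ _ hnd v hv
      have hau : a ≠ u := by simpa using hnd
      refine ⟨a, u, hau, by simpa using hv, pairUp_head_left a u [],
        pairUp_head_right [] (Ne.symm hau), by simp, by simp, Or.inr ⟨rfl, rfl⟩⟩
  | [a, b], u => by intro _ hodd; simp [Nat.odd_iff] at hodd
  | a :: b :: c :: rest, u => by
      intro halt hodd hnd v hv
      obtain ⟨hab, hbc, halt'⟩ := halt
      have hodd' : Odd (c :: rest).length := by
        simp only [List.length_cons, Nat.odd_iff] at hodd ⊢; omega
      have hnd2 : (a :: b :: ((c :: rest) ++ [u])).Nodup := hnd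
      obtain ⟨hna, hnd3⟩ := List.nodup_cons.mp hnd2
      obtain ⟨hnb, hndL⟩ := List.nodup_cons.mp hnd3
      have hba : b ≠ a := fun h => hna (h ▸ List.mem_cons_self)
      have hna' : a ∉ (c :: rest) ++ [u] := fun h => hna (List.mem_cons_of_mem _ h)
      rcases List.mem_cons.mp hv with rfl | hv2
      · exact ⟨v, b, fun h => hba h.symm, Or.inl rfl, pairUp_head_left _ _ _,
          pairUp_head_right _ hba, List.mem_cons_self,
          List.mem_cons_of_mem _ (List.mem_cons_self),
          Or.inl ⟨hab, List.mem_cons_self,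
            List.mem_cons_of_mem _ (List.mem_cons_self)⟩⟩
      rcases List.mem_cons.mp hv2 with rfl | hv3
      · exact ⟨a, v, fun h => hba h.symm, Or.inr rfl, pairUp_head_left _ _ _,
          pairUp_head_right _ hba, List.mem_cons_self,
          List.mem_cons_of_mem _ (List.mem_cons_self),
          Or.inl ⟨hab, List.mem_cons_self,
            List.mem_cons_of_mem _ (List.mem_cons_self)⟩⟩
      · obtain ⟨s, t, hst, hveq, hps, hpt, hs, ht, hcase⟩ :=
          pair_master R P (c :: rest) u halt' hodd' hndL v hv3
        have hsa : s ≠ a := fun h => hna' (h ▸ hs)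
        have hsb : s ≠ b := fun h => hnb (h ▸ hs)
        have hta : t ≠ a := fun h => hna' (h ▸ ht)
        have htb : t ≠ b := fun h => hnb (h ▸ ht)
        refine ⟨s, t, hst, hveq, ?_, ?_, ?_, ?_, ?_⟩
        · show pairUp (a :: b :: ((c :: rest) ++ [u])) s = some t
          rw [pairUp_cons_cons _ hsa hsb]; exact hps
        · show pairUp (a :: b :: ((c :: rest) ++ [u])) t = some s
          rw [pairUp_cons_cons _ hta htb]; exact hpt
        · exact List.mem_cons_of_mem _ (List.mem_cons_of_mem _ hs)
        · exact List.mem_cons_of_mem _ (List.mem_cons_of_mem _ ht)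
        · rcases hcase with ⟨hnme, hsl, htl⟩ | ⟨hlast, rfl⟩
          · exact Or.inl ⟨hnme, List.mem_cons_of_mem _ (List.mem_cons_of_mem _ hsl),
              List.mem_cons_of_mem _ (List.mem_cons_of_mem _ htl)⟩
          · refine Or.inr ⟨?_, rfl⟩
            rw [List.getLast?_cons_cons, List.getLast?_cons_cons]
            exact hlast

/-- Claim 2: let `P` be a popular matching leaving exactly `U`
uncovered.  If a matching edge of `P` is reached in `G_P` by an alternating path
starting with an edge blocking `P`, with `q` the last vertex of the path (so the
last edge is the matching edge `(p,q)`, forced by the odd length), then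
`q ∈ Z = V ∖ N(U) ∖ U`. -/
theorem claim2 {V : Type*} [Fintype V] (R : Roommates V)
    (P : V → Option V) (hP : IsMatching R P) (hpop : Popular R P)
    (U : Set V) (hU : ∀ v, P v = none ↔ v ∈ U)
    (l : List V) (hnd : l.Nodup)
    (x y : V) (t : List V) (hl : l = x :: y :: t) (hblock : Blocks R P x y)
    (halt : AltList (NonMatchEdge R P) P false l)
    (hodd : Odd l.length)
    (q : V) (hq : l.getLast? = some q) :
    q ∉ U ∧ ∀ u ∈ U, ¬ R.G.Adj q u := by
  classical
  have hPsym : ∀ a b, P a = some b → P b = some a := fun a b h => (hP a b h).2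
  have hxy : x ≠ y := hblock.1.ne
  by_cases hx : P x = none
  -- Case 1: x unmatched: the blocking edge (x,y) already contradicts popularity.
  · exfalso
    set M0 : V → Option V := fun v =>
      if v = x then some y else if v = y then some x
      else if P y = some v then none else P v with hM0def
    have hM0x : M0 x = some y := by simp [hM0def]
    have hM0y : M0 y = some x := by simp [hM0def, Ne.symm hxy]
    have hM0 : IsMatching R M0 := by
      intro v c h
      by_cases hvx : v = x
      · subst hvx
        rw [hM0x] at h
        obtain rfl : y = c := by simpa using h
        exact ⟨hblock.1, hM0y⟩
      by_cases hvy : v = y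
      · subst hvy
        rw [hM0y] at h
        obtain rfl : x = c := by simpa using h
        exact ⟨hblock.1.symm, hM0x⟩
      by_cases hvp : P y = some v
      · simp [hM0def, hvx, hvy, hvp] at h
      · have hPv : P v = some c := by simpa [hM0def, hvx, hvy, hvp] using h
        refine ⟨(hP v c hPv).1, ?_⟩
        have hcv : P c = some v := hPsym v c hPv
        have hcx : c ≠ x := by
          intro h'; subst h'
          rw [hcv] at hx; cases hx
        have hcy : c ≠ y := by
          intro h'; subst h'
          exact hvp hcv
        have hyc : ¬ (P y = some c) := by
          intro h'
          have := hPsym y c h'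
          rw [hcv] at this
          exact hvy (by simpa using this)
        simp [hM0def, hcx, hcy, hyc, hcv]
    have hplusx : Prefers R M0 P x := Or.inl ⟨y, hM0x, hx⟩
    have hplusy : Prefers R M0 P y := prefers_of_votePlus R hM0y hblock.2.2.2
    have hsub : {v | Prefers R P M0 v} ⊆ {v | P y = some v} := by
      intro a ha
      simp only [Set.mem_setOf_eq] at ha ⊢
      by_contra hna
      by_cases hax : a = x
      · exact prefers_antisymm R hplusx (hax ▸ ha)
      by_cases hay : a = y
      · exact prefers_antisymm R hplusy (hay ▸ ha)
      · exact not_prefers_of_eq R (by simp [hM0def, hax, hay, hna]) ha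
    have h1 : {v | Prefers R P M0 v}.ncard ≤ 1 := by
      refine le_trans (Set.ncard_le_ncard hsub (Set.toFinite _)) ?_
      rw [Set.ncard_le_one (Set.toFinite _)]
      intro a ha b hb
      simp only [Set.mem_setOf_eq] at ha hb
      rw [ha] at hb; simpa using hb
    have h2 : 2 ≤ {v | Prefers R M0 P v}.ncard := by
      have : ({x, y} : Set V) ⊆ {v | Prefers R M0 P v} := by
        rintro a (rfl | rfl)
        · exact hplusx
        · exact hplusy
      calc 2 = ({x, y} : Set V).ncard := (Set.ncard_pair hxy).symm
        _ ≤ _ := Set.ncard_le_ncard this (Set.toFinite _)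
    have := hpop M0 hM0
    omega
  -- Case 2: x is matched.
  obtain ⟨w, hw⟩ : ∃ w, P x = some w := Option.ne_none_iff_exists'.mp hx
  have hall : ∀ v ∈ l, ∃ c, P v = some c := by
    refine alt_all_matched R P hP l halt hodd ?_
    intro a ha
    rw [hl] at ha
    obtain rfl : x = a := by simpa using ha
    exact ⟨w, hw⟩
  have hqmem : q ∈ l := by
    obtain ⟨h1, h2⟩ := List.mem_getLast?_eq_getLast (show q ∈ l.getLast? from hq)
    rw [h2]
    exact List.getLast_mem h1
  have hqU : q ∉ U := by
    intro hqU
    obtain ⟨p, hp⟩ := hall q hqmem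
    rw [(hU q).mpr hqU] at hp; cases hp
  refine ⟨hqU, ?_⟩
  intro u hu hadj
  exfalso
  have hPu : P u = none := (hU u).mpr hu
  have hul : u ∉ l := by
    intro h
    obtain ⟨c, hc⟩ := hall u h
    rw [hPu] at hc; cases hc
  set l' : List V := l ++ [u] with hl'def
  have hnd' : l'.Nodup := by
    refine hnd.append (List.nodup_singleton u) ?_
    intro a ha hb
    obtain rfl : a = u := by simpa using hb
    exact hul ha
  set M' : V → Option V := fun v =>
    if v ∈ l' then pairUp l' v else if P x = some v then none else P v with hM'def
  have hM'eq1 : ∀ v, v ∈ l' → M' v = pairUp l' v := fun v hv => by simp [hM'def, hv]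
  have hM'eq3 : ∀ v, v ∉ l' → ¬ (P x = some v) → M' v = P v :=
    fun v hv hpv => by simp [hM'def, hv, hpv]
  have master := pair_master R P l u halt hodd hnd'
  have hxl : x ∈ l := by rw [hl]; exact List.mem_cons_self
  have hyl : y ∈ l := by rw [hl]; simp
  have hmeml : ∀ v ∈ l, v ∈ l' := fun v hv => List.mem_append_left _ hv
  have hul' : u ∈ l' := List.mem_append_right _ (List.mem_singleton_self u)
  -- the pair containing u is (q, u)
  obtain ⟨s0, t0, hst0, hueq, hps0, hpt0, hs0, ht0, hcase0⟩ := master u hul'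
  have hqu : pairUp l' q = some u ∧ pairUp l' u = some q := by
    rcases hcase0 with ⟨_, hsl, htl⟩ | ⟨hlast, rfl⟩
    · rcases hueq with rfl | rfl
      · exact absurd hsl hul
      · exact absurd htl hul
    · obtain rfl : q = s0 := by rw [hq] at hlast; simpa using hlast
      exact ⟨hps0, hpt0⟩
  have hM'q : M' q = some u := by rw [hM'eq1 q (hmeml q hqmem)]; exact hqu.1
  have hM'u : M' u = some q := by rw [hM'eq1 u hul']; exact hqu.2
  -- pairUp at the head pair (x, y)
  have hl'eq : l' = x :: y :: (t ++ [u]) := by rw [hl'def, hl]; rfl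
  have hpx : pairUp l' x = some y := by rw [hl'eq]; exact pairUp_head_left _ _ _
  have hpy : pairUp l' y = some x := by rw [hl'eq]; exact pairUp_head_right _ (Ne.symm hxy)
  have hM'x : M' x = some y := by rw [hM'eq1 x (hmeml x hxl)]; exact hpx
  have hM'y : M' y = some x := by rw [hM'eq1 y (hmeml y hyl)]; exact hpy
  -- M' is a matching
  have hM' : IsMatching R M' := by
    intro v c h
    by_cases hv' : v ∈ l'
    · have hpv : pairUp l' v = some c := by rw [hM'eq1 v hv'] at h; exact h
      obtain ⟨s, t1, hst, hveq, hps, hpt, hs, ht, hcase⟩ := master v hv'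
      rcases hveq with rfl | rfl
      · rw [hps] at hpv
        obtain rfl : c = t1 := by simpa using hpv.symm
        refine ⟨?_, ?_⟩
        · rcases hcase with ⟨hnme, _, _⟩ | ⟨hlast, rfl⟩
          · exact hnme.1
          · obtain rfl : q = v := by rw [hq] at hlast; simpa using hlast
            exact hadj
        · rw [hM'eq1 c ht]; exact hpt
      · rw [hpt] at hpv
        obtain rfl : c = s := by simpa using hpv.symm
        refine ⟨?_, ?_⟩
        · rcases hcase with ⟨hnme, _, _⟩ | ⟨hlast, rfl⟩
          · exact hnme.1.symm
          · obtain rfl : q = c := by rw [hq] at hlast; simpa using hlast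
            exact hadj.symm
        · rw [hM'eq1 c hs]; exact hps
    · by_cases hvw : P x = some v
      · simp [hM'def, hv', hvw] at h
      · have hPv : P v = some c := by rw [hM'eq3 v hv' hvw] at h; exact h
        refine ⟨(hP v c hPv).1, ?_⟩
        have hcv : P c = some v := hPsym v c hPv
        have hcl' : c ∉ l' := by
          intro hc
          rcases List.mem_append.mp hc with hcl | hcu
          · by_cases hcx : c = x
            · subst hcx
              exact hvw hcv
            · have hct : c ∈ l.tail := by
                rw [hl] at hcl ⊢
                rcases List.mem_cons.mp hcl with rfl | h2
                · exact absurd rfl hcx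
                · exact h2
              have hvt := alt_tail_closed R P hP l halt hodd c hct v hcv
              exact hv' (hmeml v (List.mem_of_mem_tail hvt))
          · obtain rfl : c = u := by simpa using hcu
            rw [hPu] at hcv; cases hcv
        have hxc : ¬ (P x = some c) := by
          intro h'
          have h2 : P c = some x := hPsym x c h'
          rw [hcv] at h2
          obtain rfl : v = x := by simpa using h2
          exact hv' (hmeml v hxl)
        rw [hM'eq3 c hcl' hxc]; exact hcv
  -- plus votes
  have hplusx : Prefers R M' P x := prefers_of_votePlus R hM'x hblock.2.2.1
  have hplusy : Prefers R M' P y := prefers_of_votePlus R hM'y hblock.2.2.2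
  have hplusu : Prefers R M' P u := Or.inl ⟨q, hM'u, hPu⟩
  -- classification of the vertices preferring P to M'
  have hkey : ∀ a, Prefers R P M' a →
      (M' a = none ∧ P x = some a) ∨
      (∃ c, M' a = some c ∧ Prefers R M' P c ∧ c ≠ y) := by
    intro a ha
    by_cases hv' : a ∈ l'
    · obtain ⟨s, t1, hst, hveq, hps, hpt, hs, ht, hcase⟩ := master a hv'
      right
      rcases hveq with rfl | rfl
      · have hM'a : M' a = some t1 := by rw [hM'eq1 a hv']; exact hps
        have hM't : M' t1 = some a := by rw [hM'eq1 t1 ht]; exact hpt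
        refine ⟨t1, hM'a, ?_, ?_⟩
        · rcases hcase with ⟨hnme, hsl, htl⟩ | ⟨hlast, rfl⟩
          · rcases hnme.2.2 with hv1 | hv2
            · exact absurd ha (fun h => prefers_antisymm R (prefers_of_votePlus R hM'a hv1) h)
            · exact prefers_of_votePlus R hM't hv2
          · exact hplusu
        · intro h; subst h
          rw [hpy] at hpt
          obtain rfl : x = a := by simpa using hpt
          exact prefers_antisymm R hplusx ha
      · have hM'a : M' a = some s := by rw [hM'eq1 a hv']; exact hpt
        have hM's : M' s = some a := by rw [hM'eq1 s hs]; exact hps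
        refine ⟨s, hM'a, ?_, ?_⟩
        · rcases hcase with ⟨hnme, hsl, htl⟩ | ⟨hlast, rfl⟩
          · rcases hnme.2.2 with hv1 | hv2
            · exact prefers_of_votePlus R hM's hv1
            · exact absurd ha (fun h => prefers_antisymm R (prefers_of_votePlus R hM'a hv2) h)
          · exact absurd ha (fun h => prefers_antisymm R hplusu h)
        · intro h; subst h
          rw [hpy] at hps
          obtain rfl : x = a := by simpa using hps
          exact prefers_antisymm R hplusx ha
    · by_cases hvw : P x = some a
      · exact Or.inl ⟨by simp [hM'def, hv', hvw], hvw⟩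
      · exact absurd ha (not_prefers_of_eq R (hM'eq3 a hv' hvw).symm)
  set plus := {v | Prefers R M' P v} with hplusdef
  set minus := {v | Prefers R P M' v} with hminusdef
  have hmaps : ∀ a ∈ minus, (M' a).getD x ∈ plus \ {y} := by
    intro a ha
    rcases hkey a ha with ⟨h1, _⟩ | ⟨c, hc, hcp, hcy⟩
    · rw [h1]
      exact ⟨hplusx, by simpa using hxy⟩
    · rw [hc]
      exact ⟨hcp, by simpa using hcy⟩
  have hinj : Set.InjOn (fun a => (M' a).getD x) minus := by
    intro a ha b hb hfab
    simp only at hfab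
    rcases hkey a ha with ⟨ha1, ha2⟩ | ⟨c, hc, hcp, hcy⟩ <;>
      rcases hkey b hb with ⟨hb1, hb2⟩ | ⟨c', hc', hcp', hcy'⟩
    · rw [ha2] at hb2; simpa using hb2
    · exfalso
      rw [ha1, hc'] at hfab
      simp only [Option.getD_none, Option.getD_some] at hfab
      rw [← hfab] at hc'
      have h2 : M' x = some b := (hM' b x hc').2
      rw [hM'x] at h2
      obtain rfl : y = b := by simpa using h2
      exact prefers_antisymm R hplusy hb
    · exfalso
      rw [hb1, hc] at hfab
      simp only [Option.getD_none, Option.getD_some] at hfab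
      rw [hfab] at hc
      have h2 : M' x = some a := (hM' a x hc).2
      rw [hM'x] at h2
      obtain rfl : y = a := by simpa using h2
      exact prefers_antisymm R hplusy ha
    · rw [hc, hc'] at hfab
      simp only [Option.getD_some] at hfab
      subst hfab
      have h1 : M' c = some a := (hM' a c hc).2
      have h2 : M' c = some b := (hM' b c hc').2
      rw [h1] at h2; simpa using h2
  have hup : plus.ncard ≤ minus.ncard := hpop M' hM'
  have hdown : minus.ncard ≤ (plus \ {y}).ncard :=
    Set.ncard_le_ncard_of_injOn _ hmaps hinj (Set.toFinite _)
  have hlt : (plus \ {y}).ncard < plus.ncard :=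
    Set.ncard_diff_singleton_lt_of_mem hplusy (Set.toFinite _)
  omega
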